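/- For all square-integrable real random variables x̂₁, ŷ₁, ŷ₂ on (Ω, F, P) one has E[ −b(1−γ)A_k² x̂₁² − (b γ A_k²/2)·E[x̂₁|G]·x̂₁ − (κ_f²/c₁₂ + κ_g²/c₂₂) ŷ₁² + 2(κ_f κ_e / c₁₂) ŷ₁ ŷ₂ − (2(η+ν) + κ_e²/c₁₂) ŷ₂² + ν·E[ŷ₂|G]·ŷ₂ ] ≤ −β₂ · E[ ŷ₁² + ŷ₂² ], where β₂ := min( κ_f²/c₁₂ + κ_g²/c₂₂ − κ_f κ_e/c₁₂ , 2η + ν + κ_e²/c₁₂ − κ_f κ_e/c₁₂ ) > 0. (This is the monotonicity condition, with β₁ = 0 and the above β₂, which by Peng–Wu's continuation method yields global solvability of the McKean–Vlasov FBSDE of the model.) -/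

import Mathlib

open MeasureTheory ENNReal

lemma my_integrable_mul {Ω : Type*} {mΩ : MeasurableSpace Ω} {P : Measure Ω}
    {f g : Ω → ℝ} (hf : MemLp f 2 P) (hg : MemLp g 2 P) :
    Integrable (fun ω => f ω * g ω) P := by
  have h : MemLp (f • g) 1 P := hg.smul (r := 1) hf
  rw [memLp_one_iff_integrable] at h
  exact h

lemma my_memℒp_condexp {Ω : Type*} {G mΩ : MeasurableSpace Ω} {P : Measure Ω}
    [IsProbabilityMeasure P] (hG : G ≤ mΩ) {f : Ω → ℝ}
    (hf : MemLp f 2 P) : MemLp (P[f|G]) 2 P := by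
  have hae : ((condExpL2 ℝ ℝ hG (hf.toLp f) : Lp ℝ 2 P) : Ω → ℝ) =ᵐ[P] P[f|G] := by
    refine ae_eq_condExp_of_forall_setIntegral_eq hG (hf.integrable one_le_two) ?_ ?_ ?_
    · intro s hs hμs
      exact integrableOn_condExpL2_of_measure_ne_top hG hμs.ne _
    · intro s hs hμs
      refine (integral_condExpL2_eq (𝕜 := ℝ) hG (hf.toLp f) hs hμs.ne).trans ?_
      exact setIntegral_congr_ae (hG s hs) ((hf.coeFn_toLp).mono fun x hx _ => hx)
    · exact aestronglyMeasurable_condExpL2 hG _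
  exact (Lp.memLp _).ae_eq hae

lemma my_integral_condexp_mul_self {Ω : Type*} {G mΩ : MeasurableSpace Ω} {P : Measure Ω}
    [IsProbabilityMeasure P] (hG : G ≤ mΩ) {f : Ω → ℝ} (hf : MemLp f 2 P) :
    ∫ ω, (P[f|G]) ω * f ω ∂P = ∫ ω, ((P[f|G]) ω) ^ 2 ∂P := by
  have hE : MemLp (P[f|G]) 2 P := my_memℒp_condexp hG hf
  have hint : Integrable (fun ω => (P[f|G]) ω * f ω) P := my_integrable_mul hE hf
  have h1 : ∫ ω, (P[f|G]) ω * f ω ∂P = ∫ ω, (P[fun ω => (P[f|G]) ω * f ω|G]) ω ∂P :=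
    (integral_condExp hG).symm
  rw [h1]
  refine integral_congr_ae ?_
  have hmul : P[(P[f|G]) * f|G] =ᵐ[P] (P[f|G]) * P[f|G] :=
    condExp_mul_of_stronglyMeasurable_left stronglyMeasurable_condExp hint (hf.integrable one_le_two)
  filter_upwards [hmul, condExp_congr_ae (μ := P) (m := G)
    (show (P[f|G]) * f =ᵐ[P] fun ω => (P[f|G]) ω * f ω from .rfl)] with ω h h'
  simp only [Pi.mul_apply] at h h'
  rw [← h', h, sq]

lemma my_integral_condexp_mul_nonneg {Ω : Type*} {G mΩ : MeasurableSpace Ω} {P : Measure Ω}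
    [IsProbabilityMeasure P] (hG : G ≤ mΩ) {f : Ω → ℝ} (hf : MemLp f 2 P) :
    0 ≤ ∫ ω, (P[f|G]) ω * f ω ∂P := by
  rw [my_integral_condexp_mul_self hG hf]
  exact integral_nonneg fun ω => sq_nonneg _

lemma my_integral_condexp_mul_le {Ω : Type*} {G mΩ : MeasurableSpace Ω} {P : Measure Ω}
    [IsProbabilityMeasure P] (hG : G ≤ mΩ) {f : Ω → ℝ} (hf : MemLp f 2 P) :
    ∫ ω, (P[f|G]) ω * f ω ∂P ≤ ∫ ω, f ω ^ 2 ∂P := by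
  have hE : MemLp (P[f|G]) 2 P := my_memℒp_condexp hG hf
  have hint : Integrable (fun ω => (P[f|G]) ω * f ω) P := my_integrable_mul hE hf
  have key := my_integral_condexp_mul_self hG hf
  have h0 : 0 ≤ ∫ ω, (f ω - (P[f|G]) ω) ^ 2 ∂P := integral_nonneg fun ω => sq_nonneg _
  have e1 : (fun ω => (f ω - (P[f|G]) ω) ^ 2)
      = fun ω => (f ω ^ 2 - 2 * ((P[f|G]) ω * f ω)) + ((P[f|G]) ω) ^ 2 := by
    funext ω; ring
  have hA : Integrable (fun ω => f ω ^ 2 - 2 * ((P[f|G]) ω * f ω)) P :=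
    hf.integrable_sq.sub (hint.const_mul 2)
  rw [e1, integral_add hA hE.integrable_sq,
    integral_sub hf.integrable_sq (hint.const_mul 2), integral_const_mul] at h0
  linarith

/-- **Monotonicity condition for the Peng–Wu continuation method.**
For all square-integrable real random variables `x̂₁, ŷ₁, ŷ₂` one has
`E[−b(1−γ)A_k² x̂₁² − (bγA_k²/2)·E[x̂₁|G]·x̂₁ − (κ_f²/c₁₂ + κ_g²/c₂₂) ŷ₁²`
`  + 2(κ_f κ_e/c₁₂) ŷ₁ ŷ₂ − (2(η+ν) + κ_e²/c₁₂) ŷ₂² + ν·E[ŷ₂|G]·ŷ₂]`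
`≤ −β₂ · E[ŷ₁² + ŷ₂²]`, where
`β₂ := min(κ_f²/c₁₂ + κ_g²/c₂₂ − κ_f κ_e/c₁₂, 2η + ν + κ_e²/c₁₂ − κ_f κ_e/c₁₂) > 0`. -/
theorem stmt_2
    {Ω : Type*} [mΩ : MeasurableSpace Ω] (P : Measure Ω) [IsProbabilityMeasure P]
    (G : MeasurableSpace Ω) (hG : G ≤ mΩ)
    (b γ Ak κf κg κe c12 c22 η ν : ℝ)
    (hb : 0 ≤ b) (hγ0 : 0 ≤ γ) (hγ1 : γ ≤ 1) (hAk : 0 < Ak)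
    (hκf : 0 < κf) (hκg : 0 < κg) (hκe : 0 < κe)
    (hc12 : 0 < c12) (hc22 : 0 < c22) (hη : 0 < η) (hν : 0 < ν)
    (hstruct1 : 0 < κf ^ 2 / c12 + κg ^ 2 / c22 - κf * κe / c12)
    (hstruct2 : 0 < 2 * η + ν + κe ^ 2 / c12 - κf * κe / c12)
    (x1 y1 y2 : Ω → ℝ)
    (hx1 : MemLp x1 2 P) (hy1 : MemLp y1 2 P) (hy2 : MemLp y2 2 P) :
    0 < min (κf ^ 2 / c12 + κg ^ 2 / c22 - κf * κe / c12)
        (2 * η + ν + κe ^ 2 / c12 - κf * κe / c12) ∧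
    ∫ ω, (-(b * (1 - γ) * Ak ^ 2) * (x1 ω) ^ 2
        - b * γ * Ak ^ 2 / 2 * ((P[x1 | G]) ω) * x1 ω
        - (κf ^ 2 / c12 + κg ^ 2 / c22) * (y1 ω) ^ 2
        + 2 * (κf * κe / c12) * (y1 ω) * (y2 ω)
        - (2 * (η + ν) + κe ^ 2 / c12) * (y2 ω) ^ 2
        + ν * ((P[y2 | G]) ω) * (y2 ω)) ∂P
      ≤ - min (κf ^ 2 / c12 + κg ^ 2 / c22 - κf * κe / c12)
            (2 * η + ν + κe ^ 2 / c12 - κf * κe / c12)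
          * ∫ ω, ((y1 ω) ^ 2 + (y2 ω) ^ 2) ∂P := by
  set β : ℝ := min (κf ^ 2 / c12 + κg ^ 2 / c22 - κf * κe / c12)
      (2 * η + ν + κe ^ 2 / c12 - κf * κe / c12) with hβ
  have hβpos : 0 < β := lt_min hstruct1 hstruct2
  refine ⟨hβpos, ?_⟩
  -- abbreviations
  set a : ℝ := κf ^ 2 / c12 + κg ^ 2 / c22 with ha
  set c : ℝ := κf * κe / c12 with hc
  set D : ℝ := 2 * (η + ν) + κe ^ 2 / c12 with hD
  have hcpos : 0 < c := by positivity
  have hβ1 : β ≤ a - c := min_le_left _ _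
  have hβ2 : β ≤ D - ν - c := by
    have := min_le_right (κf ^ 2 / c12 + κg ^ 2 / c22 - κf * κe / c12)
      (2 * η + ν + κe ^ 2 / c12 - κf * κe / c12)
    rw [← hβ] at this
    rw [hD]; linarith
  -- integrability
  have hEx : MemLp (P[x1|G]) 2 P := my_memℒp_condexp hG hx1
  have hEy : MemLp (P[y2|G]) 2 P := my_memℒp_condexp hG hy2
  have hi1 : Integrable (fun ω => x1 ω ^ 2) P := hx1.integrable_sq
  have hi2 : Integrable (fun ω => (P[x1|G]) ω * x1 ω) P := my_integrable_mul hEx hx1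
  have hi3 : Integrable (fun ω => y1 ω ^ 2) P := hy1.integrable_sq
  have hi4 : Integrable (fun ω => y1 ω * y2 ω) P := my_integrable_mul hy1 hy2
  have hi5 : Integrable (fun ω => y2 ω ^ 2) P := hy2.integrable_sq
  have hi6 : Integrable (fun ω => (P[y2|G]) ω * y2 ω) P := my_integrable_mul hEy hy2
  -- generic splitting of six-term integrands
  have hsplit : ∀ c1 c2 c3 c4 c5 c6 : ℝ,
      ∫ ω, (c1 * x1 ω ^ 2 + c2 * ((P[x1|G]) ω * x1 ω) + c3 * y1 ω ^ 2
        + c4 * (y1 ω * y2 ω) + c5 * y2 ω ^ 2 + c6 * ((P[y2|G]) ω * y2 ω)) ∂P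
      = c1 * ∫ ω, x1 ω ^ 2 ∂P + c2 * ∫ ω, (P[x1|G]) ω * x1 ω ∂P
        + c3 * ∫ ω, y1 ω ^ 2 ∂P + c4 * ∫ ω, y1 ω * y2 ω ∂P
        + c5 * ∫ ω, y2 ω ^ 2 ∂P + c6 * ∫ ω, (P[y2|G]) ω * y2 ω ∂P := by
    intro c1 c2 c3 c4 c5 c6
    have h12 : Integrable (fun ω => c1 * x1 ω ^ 2 + c2 * ((P[x1|G]) ω * x1 ω)) P :=
      (hi1.const_mul c1).add (hi2.const_mul c2)
    have h123 : Integrable (fun ω => c1 * x1 ω ^ 2 + c2 * ((P[x1|G]) ω * x1 ω)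
        + c3 * y1 ω ^ 2) P := h12.add (hi3.const_mul c3)
    have h1234 : Integrable (fun ω => c1 * x1 ω ^ 2 + c2 * ((P[x1|G]) ω * x1 ω)
        + c3 * y1 ω ^ 2 + c4 * (y1 ω * y2 ω)) P := h123.add (hi4.const_mul c4)
    have h12345 : Integrable (fun ω => c1 * x1 ω ^ 2 + c2 * ((P[x1|G]) ω * x1 ω)
        + c3 * y1 ω ^ 2 + c4 * (y1 ω * y2 ω) + c5 * y2 ω ^ 2) P :=
      h1234.add (hi5.const_mul c5)
    rw [integral_add h12345 (hi6.const_mul c6), integral_add h1234 (hi5.const_mul c5),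
      integral_add h123 (hi4.const_mul c4), integral_add h12 (hi3.const_mul c3),
      integral_add (hi1.const_mul c1) (hi2.const_mul c2)]
    simp only [integral_const_mul]
  -- rewrite the LHS integrand in six-term form
  have hLHS : ∫ ω, (-(b * (1 - γ) * Ak ^ 2) * (x1 ω) ^ 2
        - b * γ * Ak ^ 2 / 2 * ((P[x1 | G]) ω) * x1 ω
        - a * (y1 ω) ^ 2 + 2 * c * (y1 ω) * (y2 ω) - D * (y2 ω) ^ 2
        + ν * ((P[y2 | G]) ω) * (y2 ω)) ∂P
      = (-(b * (1 - γ) * Ak ^ 2)) * ∫ ω, x1 ω ^ 2 ∂P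
        + (-(b * γ * Ak ^ 2 / 2)) * ∫ ω, (P[x1|G]) ω * x1 ω ∂P
        + (-a) * ∫ ω, y1 ω ^ 2 ∂P + (2 * c) * ∫ ω, y1 ω * y2 ω ∂P
        + (-D) * ∫ ω, y2 ω ^ 2 ∂P + ν * ∫ ω, (P[y2|G]) ω * y2 ω ∂P := by
    rw [← hsplit]
    congr 1
    funext ω
    ring
  -- key quadratic inequality on integrals
  have hquad : 0 ≤ (a - β) * ∫ ω, y1 ω ^ 2 ∂P + (-(2 * c)) * ∫ ω, y1 ω * y2 ω ∂P
      + (D - ν - β) * ∫ ω, y2 ω ^ 2 ∂P := by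
    have h0 : 0 ≤ ∫ ω, ((0 : ℝ) * x1 ω ^ 2 + 0 * ((P[x1|G]) ω * x1 ω)
        + (a - β) * y1 ω ^ 2 + (-(2 * c)) * (y1 ω * y2 ω)
        + (D - ν - β) * y2 ω ^ 2 + 0 * ((P[y2|G]) ω * y2 ω)) ∂P := by
      refine integral_nonneg fun ω => ?_
      have h1 := sq_nonneg (y1 ω - y2 ω)
      have h2 := sq_nonneg (y1 ω)
      have h3 := sq_nonneg (y2 ω)
      have t1 : 0 ≤ (a - c - β) * y1 ω ^ 2 := mul_nonneg (by linarith) h2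
      have t2 : 0 ≤ (D - ν - c - β) * y2 ω ^ 2 := mul_nonneg (by linarith) h3
      have t3 : 0 ≤ c * (y1 ω - y2 ω) ^ 2 := mul_nonneg hcpos.le h1
      have t4 : c * (y1 ω - y2 ω) ^ 2
          = c * y1 ω ^ 2 - 2 * c * (y1 ω * y2 ω) + c * y2 ω ^ 2 := by ring
      simp only [Pi.zero_apply]
      linarith
    rw [hsplit] at h0
    linarith
  -- nonnegativity facts
  have hI1 : 0 ≤ ∫ ω, x1 ω ^ 2 ∂P := integral_nonneg fun ω => sq_nonneg _
  have hI2 : 0 ≤ ∫ ω, (P[x1|G]) ω * x1 ω ∂P := my_integral_condexp_mul_nonneg hG hx1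
  have hI6 : ∫ ω, (P[y2|G]) ω * y2 ω ∂P ≤ ∫ ω, y2 ω ^ 2 ∂P := my_integral_condexp_mul_le hG hy2
  have hc1 : 0 ≤ b * (1 - γ) * Ak ^ 2 := by
    have : 0 ≤ 1 - γ := by linarith
    positivity
  have hc2 : 0 ≤ b * γ * Ak ^ 2 / 2 := by positivity
  -- RHS
  have hRHS : ∫ ω, ((y1 ω) ^ 2 + (y2 ω) ^ 2) ∂P = (∫ ω, y1 ω ^ 2 ∂P) + ∫ ω, y2 ω ^ 2 ∂P :=
    integral_add hi3 hi5
  rw [hLHS, hRHS]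
  have h1 := mul_nonneg hc1 hI1
  have h2 := mul_nonneg hc2 hI2
  have h6 := mul_le_mul_of_nonneg_left hI6 hν.le
  clear_value β a c D
  nlinarith [hquad, h1, h2, h6]
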